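/- Let m ≥ 2, let A and B be disjoint sets of m vertices each in {1,…,p} (p ≥ 2m), and let G be the building-block graph whose edges are: all pairs within A, all pairs within B, and a fixed perfect matching of m edges between A and B, with no other edges. Then for every pair of distinct vertices i, j ∈ A ∪ B (including pairs with i ∈ A and j ∈ B not joined by an edge), E_G[X_i X_j] ≥ 1 − 4m² / (m + e^{λ(m−1)/2}) − 2 / (1 + e^{2mλ}). -/

import Mathlib

open Real Finset
open scoped Classical

noncomputable section

/-- Value of a spin: `true ↦ +1`, `false ↦ -1`. -/
def confVal (b : Bool) : ℝ := if b then 1 else -1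

/-- The Ising interaction `∑_{{i,j}∈E} x_i x_j` (each edge counted once). -/
def isingEnergy {p : ℕ} (G : SimpleGraph (Fin p)) (x : Fin p → Bool) : ℝ :=
  (1 / 2) * ∑ i : Fin p, ∑ j : Fin p,
    if G.Adj i j then confVal (x i) * confVal (x j) else 0

/-- The partition function `Z_G`. -/
def isingZ {p : ℕ} (lam : ℝ) (G : SimpleGraph (Fin p)) : ℝ :=
  ∑ x : Fin p → Bool, Real.exp (lam * isingEnergy G x)

/-- The ferromagnetic Ising distribution `P_G(x)`. -/
def isingP {p : ℕ} (lam : ℝ) (G : SimpleGraph (Fin p)) (x : Fin p → Bool) : ℝ :=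
  Real.exp (lam * isingEnergy G x) / isingZ lam G

/-- Kullback–Leibler divergence `D(P_G ‖ P_{G'})`. -/
def isingKL {p : ℕ} (lam : ℝ) (G G' : SimpleGraph (Fin p)) : ℝ :=
  ∑ x : Fin p → Bool, isingP lam G x * Real.log (isingP lam G x / isingP lam G' x)

/-- The correlation `E_G[X_i X_j]`. -/
def isingCorr {p : ℕ} (lam : ℝ) (G : SimpleGraph (Fin p)) (i j : Fin p) : ℝ :=
  ∑ x : Fin p → Bool, isingP lam G x * (confVal (x i) * confVal (x j))

/-- Probability of an event under `P_G`. -/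
def eventProb {p : ℕ} (lam : ℝ) (G : SimpleGraph (Fin p)) (S : Set (Fin p → Bool)) : ℝ :=
  ∑ x : Fin p → Bool, if x ∈ S then isingP lam G x else 0

/-- `P_G[X_i = X_j]`. -/
def isingProbEq {p : ℕ} (lam : ℝ) (G : SimpleGraph (Fin p)) (i j : Fin p) : ℝ :=
  eventProb lam G {x | x i = x j}

/-- The edge set of `G` as a `Finset`. -/
def edgeFin {p : ℕ} (G : SimpleGraph (Fin p)) : Finset (Sym2 (Fin p)) :=
  (Set.toFinite G.edgeSet).toFinset

/-- The edit distance `|E Δ E'|` between two graphs. -/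
def editDist {p : ℕ} (G G' : SimpleGraph (Fin p)) : ℕ :=
  ((edgeFin G \ edgeFin G') ∪ (edgeFin G' \ edgeFin G)).card

def patS {m : ℕ} (σ : Fin m → Bool) : ℝ := ∑ k, confVal (σ k)

def patM {m : ℕ} (σ τ : Fin m → Bool) : ℝ := ∑ k, confVal (σ k) * confVal (τ k)

def patH {m : ℕ} (y : (Fin m → Bool) × (Fin m → Bool)) : ℝ :=
  ((patS y.1)^2 + (patS y.2)^2)/2 - m + patM y.1 y.2

def BB_Cst {m : ℕ} (σ : Fin m → Bool) : Prop :=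
  σ = (fun _ => true) ∨ σ = (fun _ => false)

lemma BB_confVal_mul_self (u : Bool) : confVal u * confVal u = 1 := by
  cases u <;> simp [confVal]

lemma BB_confVal_mul_le (u v : Bool) : confVal u * confVal v ≤ 1 := by
  cases u <;> cases v <;> simp [confVal]

lemma BB_confVal_mul_eq (u v : Bool) :
    confVal u * confVal v = if u = v then 1 else -1 := by
  cases u <;> cases v <;> simp [confVal]

lemma BB_sum_prod_ite (m : ℕ) (v : ℝ) (c : Bool) :
    ∑ σ : Fin m → Bool, (∏ k, if σ k = c then v else 1) = (1+v)^m := by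
  have h := Finset.prod_univ_sum (fun _ : Fin m => (Finset.univ : Finset Bool))
      (fun _ b => if b = c then v else (1:ℝ))
  rw [Fintype.piFinset_univ] at h
  rw [← h]
  have h2 : ∀ _k : Fin m, (∑ b : Bool, if b = c then v else (1:ℝ)) = 1 + v := by
    intro k; cases c <;> simp [Fintype.sum_bool] <;> ring
  rw [Finset.prod_congr rfl (fun k _ => h2 k), Finset.prod_const, Finset.card_univ,
    Fintype.card_fin]

lemma BB_patS_true (m : ℕ) : patS (fun _ : Fin m => true) = m := by
  simp [patS, confVal]

lemma BB_patS_false (m : ℕ) : patS (fun _ : Fin m => false) = -m := by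
  simp [patS, confVal]

lemma BB_patM_same (m : ℕ) (c : Bool) :
    patM (fun _ : Fin m => c) (fun _ => c) = m := by
  simp [patM, BB_confVal_mul_self]

lemma BB_patM_diff (m : ℕ) (c : Bool) :
    patM (fun _ : Fin m => c) (fun _ => !c) = -m := by
  cases c <;> simp [patM, confVal]

lemma BB_patH_tt (m : ℕ) : patH ((fun _ : Fin m => true), (fun _ => true)) = (m:ℝ)^2 := by
  have h := BB_patM_same m true
  simp only [patH, BB_patS_true]
  rw [h]; ring

lemma BB_patH_ff (m : ℕ) : patH ((fun _ : Fin m => false), (fun _ => false)) = (m:ℝ)^2 := by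
  have h := BB_patM_same m false
  simp only [patH, BB_patS_false]
  rw [h]; ring

lemma BB_patH_tf (m : ℕ) :
    patH ((fun _ : Fin m => true), (fun _ => false)) = (m:ℝ)^2 - 2*m := by
  have h := BB_patM_diff m true
  simp only [Bool.not_true] at h
  simp only [patH, BB_patS_true, BB_patS_false]
  rw [h]; ring

lemma BB_patH_ft (m : ℕ) :
    patH ((fun _ : Fin m => false), (fun _ => true)) = (m:ℝ)^2 - 2*m := by
  have h := BB_patM_diff m false
  simp only [Bool.not_false] at h
  simp only [patH, BB_patS_true, BB_patS_false]
  rw [h]; ring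

lemma BB_patM_le (m : ℕ) (σ τ : Fin m → Bool) : patM σ τ ≤ m := by
  unfold patM
  calc ∑ k, confVal (σ k) * confVal (τ k) ≤ ∑ _k : Fin m, (1:ℝ) :=
        Finset.sum_le_sum (fun k _ => BB_confVal_mul_le _ _)
    _ = m := by simp

lemma BB_patW_le {m : ℕ} (lam : ℝ) (hlam : 0 < lam) (y : (Fin m → Bool) × (Fin m → Bool)) :
    Real.exp (lam * patH y) ≤ Real.exp (lam * (m:ℝ)^2)
      * Real.exp (lam * ((patS y.1)^2 - (m:ℝ)^2)/2)
      * Real.exp (lam * ((patS y.2)^2 - (m:ℝ)^2)/2) := by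
  rw [← Real.exp_add, ← Real.exp_add]
  apply Real.exp_le_exp.mpr
  have hM : patM y.1 y.2 ≤ m := BB_patM_le m y.1 y.2
  have := mul_le_mul_of_nonneg_left hM hlam.le
  unfold patH; nlinarith

lemma BB_pow_bound (m : ℕ) (x : ℝ) (h0 : 0 ≤ x) (hx : (m:ℝ)*x < 1) :
    (1+x)^m * (1 - (m:ℝ)*x) ≤ 1 := by
  have h1 : (1+x)^m ≤ Real.exp ((m:ℝ)*x) := by
    calc (1+x)^m ≤ (Real.exp x)^m := by
          apply pow_le_pow_left₀ (by linarith)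
          linarith [Real.add_one_le_exp x]
      _ = Real.exp ((m:ℝ)*x) := by rw [← Real.exp_nat_mul]
  have h2 : Real.exp ((m:ℝ)*x) * (1 - (m:ℝ)*x) ≤ 1 := by
    have h3 := Real.add_one_le_exp (-((m:ℝ)*x))
    calc Real.exp ((m:ℝ)*x) * (1 - (m:ℝ)*x)
        ≤ Real.exp ((m:ℝ)*x) * Real.exp (-((m:ℝ)*x)) := by
          apply mul_le_mul_of_nonneg_left (by linarith) (Real.exp_pos _).le
      _ = 1 := by rw [← Real.exp_add]; simp
  calc (1+x)^m * (1 - (m:ℝ)*x) ≤ Real.exp ((m:ℝ)*x) * (1 - (m:ℝ)*x) := by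
        apply mul_le_mul_of_nonneg_right h1 (by linarith)
    _ ≤ 1 := h2


lemma BB_gg_le {m : ℕ} (lam : ℝ) (hlam : 0 < lam) (σ : Fin m → Bool) :
    Real.exp (lam * ((patS σ)^2 - (m:ℝ)^2)/2)
      ≤ (∏ k, if σ k = true then Real.exp (-(lam * ((m:ℝ)-1))) else 1)
        + (∏ k, if σ k = false then Real.exp (-(lam * ((m:ℝ)-1))) else 1) := by
  set A := (univ.filter fun k => σ k = true).card with hA
  have hAm : A ≤ m := by
    calc A ≤ (univ : Finset (Fin m)).card := Finset.card_filter_le _ _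
      _ = m := by simp
  have hcardF : (univ.filter fun k => σ k = false).card = m - A := by
    have h := Finset.card_filter_add_card_filter_not
      (s := (univ : Finset (Fin m))) (p := fun k => σ k = true)
    have h2 : (univ.filter fun k => ¬ (σ k = true)).card
        = (univ.filter fun k => σ k = false).card := by
      congr 1; apply Finset.filter_congr; intro k _; simp
    rw [h2] at h
    simp only [Finset.card_univ, Fintype.card_fin] at h
    omega
  have hS : patS σ = 2*(A:ℝ) - m := by
    unfold patS confVal
    rw [Finset.sum_ite (fun _ => (1:ℝ)) (fun _ => (-1:ℝ))]
    have h2 : (univ.filter fun k => ¬ (σ k = true)) = (univ.filter fun k => σ k = false) := by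
      apply Finset.filter_congr; intro k _; simp
    rw [Finset.sum_const, Finset.sum_const]
    simp only [h2, hcardF, ← hA, nsmul_eq_mul, mul_one, mul_neg_one]
    rw [Nat.cast_sub hAm]
    ring
  have hPT : (∏ k : Fin m, if σ k = true then Real.exp (-(lam*((m:ℝ)-1))) else 1)
      = Real.exp (-(lam*((m:ℝ)-1)) * A) := by
    rw [Finset.prod_ite (fun _ => Real.exp (-(lam*((m:ℝ)-1)))) (fun _ => (1:ℝ))]
    rw [Finset.prod_const, Finset.prod_const_one, mul_one, ← hA, ← Real.exp_nat_mul, mul_comm]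
  have hPF : (∏ k : Fin m, if σ k = false then Real.exp (-(lam*((m:ℝ)-1))) else 1)
      = Real.exp (-(lam*((m:ℝ)-1)) * ((m:ℝ) - A)) := by
    rw [Finset.prod_ite (fun _ => Real.exp (-(lam*((m:ℝ)-1)))) (fun _ => (1:ℝ))]
    rw [Finset.prod_const, Finset.prod_const_one, mul_one, hcardF, ← Real.exp_nat_mul,
      Nat.cast_sub hAm, mul_comm]
  have hA0 : (0:ℝ) ≤ (A:ℝ) := Nat.cast_nonneg A
  have hAmr : (A:ℝ) ≤ m := by exact_mod_cast hAm
  have hPTpos : (0:ℝ) < Real.exp (-(lam*((m:ℝ)-1)) * A) := Real.exp_pos _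
  have hPFpos : (0:ℝ) < Real.exp (-(lam*((m:ℝ)-1)) * ((m:ℝ) - A)) := Real.exp_pos _
  rw [hPT, hPF, hS]
  rcases le_or_gt (2*(A:ℝ)) m with hle | hlt
  · have hexp : lam * ((2*(A:ℝ) - m)^2 - (m:ℝ)^2)/2 ≤ -(lam*((m:ℝ)-1)) * A := by
      nlinarith [mul_nonneg (mul_nonneg hlam.le hA0) (by linarith : (0:ℝ) ≤ (m:ℝ) - 2*A + 1)]
    calc Real.exp (lam * ((2*(A:ℝ) - m)^2 - (m:ℝ)^2)/2)
        ≤ Real.exp (-(lam*((m:ℝ)-1)) * A) := Real.exp_le_exp.mpr hexp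
      _ ≤ _ := le_add_of_nonneg_right hPFpos.le
  · have hexp : lam * ((2*(A:ℝ) - m)^2 - (m:ℝ)^2)/2 ≤ -(lam*((m:ℝ)-1)) * ((m:ℝ) - A) := by
      nlinarith [mul_nonneg (mul_nonneg hlam.le (by linarith : (0:ℝ) ≤ (m:ℝ) - A))
        (by linarith : (0:ℝ) ≤ 2*(A:ℝ) - m + 1)]
    calc Real.exp (lam * ((2*(A:ℝ) - m)^2 - (m:ℝ)^2)/2)
        ≤ Real.exp (-(lam*((m:ℝ)-1)) * ((m:ℝ) - A)) := Real.exp_le_exp.mpr hexp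
      _ ≤ _ := le_add_of_nonneg_left hPTpos.le

lemma BB_G_le {m : ℕ} (hm0 : 0 < m) (lam : ℝ) (hlam : 0 < lam) :
    (∑ σ : Fin m → Bool, if ¬ BB_Cst σ then Real.exp (lam * ((patS σ)^2 - (m:ℝ)^2)/2) else 0)
      ≤ 2*((1 + Real.exp (-(lam * ((m:ℝ)-1))))^m - 1) := by
  set w := Real.exp (-(lam * ((m:ℝ)-1))) with hw
  have hwpos : 0 < w := Real.exp_pos _
  have hPTnn : ∀ σ : Fin m → Bool, (0:ℝ) ≤ ∏ k, if σ k = true then w else 1 := by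
    intro σ; apply Finset.prod_nonneg; intro k _; split <;> positivity
  have hPFnn : ∀ σ : Fin m → Bool, (0:ℝ) ≤ ∏ k, if σ k = false then w else 1 := by
    intro σ; apply Finset.prod_nonneg; intro k _; split <;> positivity
  have step1 : (∑ σ : Fin m → Bool, if ¬ BB_Cst σ then Real.exp (lam * ((patS σ)^2 - (m:ℝ)^2)/2) else 0)
      ≤ ∑ σ : Fin m → Bool, if ¬ BB_Cst σ then
          ((∏ k, if σ k = true then w else 1) + (∏ k, if σ k = false then w else 1)) else 0 := by
    apply Finset.sum_le_sum
    intro σ _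
    by_cases h : BB_Cst σ
    · simp [h]
    · simp only [h, not_false_iff, if_true]
      exact BB_gg_le lam hlam σ
  have step2 : (∑ σ : Fin m → Bool, if ¬ BB_Cst σ then
          ((∏ k, if σ k = true then w else 1) + (∏ k, if σ k = false then w else 1)) else 0)
      = (∑ σ : Fin m → Bool, if ¬ BB_Cst σ then (∏ k, if σ k = true then w else 1) else 0)
        + (∑ σ : Fin m → Bool, if ¬ BB_Cst σ then (∏ k, if σ k = false then w else 1) else 0) := by
    rw [← Finset.sum_add_distrib]
    apply Finset.sum_congr rfl
    intro σ _
    by_cases h : BB_Cst σ <;> simp [h]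
  have keyT : (∑ σ : Fin m → Bool, if ¬ BB_Cst σ then (∏ k, if σ k = true then w else 1) else 0)
      ≤ (1+w)^m - 1 := by
    rw [← Finset.sum_filter]
    have hsub : (univ.filter fun σ : Fin m → Bool => ¬ BB_Cst σ)
        ⊆ univ.erase (fun _ => false) := by
      intro σ hσ
      rw [Finset.mem_filter] at hσ
      apply Finset.mem_erase.mpr
      exact ⟨fun h => hσ.2 (Or.inr h), Finset.mem_univ σ⟩
    calc (∑ σ ∈ univ.filter fun σ : Fin m → Bool => ¬ BB_Cst σ, ∏ k, if σ k = true then w else 1)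
        ≤ ∑ σ ∈ univ.erase (fun _ => false), ∏ k, if σ k = true then w else 1 :=
          Finset.sum_le_sum_of_subset_of_nonneg hsub (fun σ _ _ => hPTnn σ)
      _ = (∑ σ : Fin m → Bool, ∏ k, if σ k = true then w else 1)
            - (∏ k : Fin m, if (false : Bool) = true then w else 1) := by
          rw [Finset.sum_erase_eq_sub (Finset.mem_univ _)]
      _ = (1+w)^m - 1 := by rw [BB_sum_prod_ite m w true]; simp
  have keyF : (∑ σ : Fin m → Bool, if ¬ BB_Cst σ then (∏ k, if σ k = false then w else 1) else 0)
      ≤ (1+w)^m - 1 := by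
    rw [← Finset.sum_filter]
    have hsub : (univ.filter fun σ : Fin m → Bool => ¬ BB_Cst σ)
        ⊆ univ.erase (fun _ => true) := by
      intro σ hσ
      rw [Finset.mem_filter] at hσ
      apply Finset.mem_erase.mpr
      exact ⟨fun h => hσ.2 (Or.inl h), Finset.mem_univ σ⟩
    calc (∑ σ ∈ univ.filter fun σ : Fin m → Bool => ¬ BB_Cst σ, ∏ k, if σ k = false then w else 1)
        ≤ ∑ σ ∈ univ.erase (fun _ => true), ∏ k, if σ k = false then w else 1 :=
          Finset.sum_le_sum_of_subset_of_nonneg hsub (fun σ _ _ => hPFnn σ)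
      _ = (∑ σ : Fin m → Bool, ∏ k, if σ k = false then w else 1)
            - (∏ k : Fin m, if (true : Bool) = false then w else 1) := by
          rw [Finset.sum_erase_eq_sub (Finset.mem_univ _)]
      _ = (1+w)^m - 1 := by rw [BB_sum_prod_ite m w false]; simp
  linarith

lemma BB_F_eq {m : ℕ} (hm0 : 0 < m) (gg : (Fin m → Bool) → ℝ)
    (hT : gg (fun _ => true) = 1) (hF : gg (fun _ => false) = 1) :
    ∑ σ, gg σ = 2 + ∑ σ, if ¬ BB_Cst σ then gg σ else 0 := by
  have hne : (fun _ : Fin m => true) ≠ fun _ => false := by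
    intro h
    exact Bool.noConfusion (congrFun h ⟨0, hm0⟩)
  have hsplit : ∀ σ : Fin m → Bool,
      gg σ = ((if σ = (fun _ => true) then gg σ else 0)
        + (if σ = (fun _ => false) then gg σ else 0))
        + (if ¬ BB_Cst σ then gg σ else 0) := by
    intro σ
    by_cases h1 : σ = (fun _ => true)
    · subst h1
      have hC : BB_Cst (fun _ : Fin m => true) := Or.inl rfl
      rw [if_pos rfl, if_neg hne, if_neg (not_not_intro hC)]
      ring
    · by_cases h2 : σ = (fun _ => false)
      · subst h2
        have hC : BB_Cst (fun _ : Fin m => false) := Or.inr rfl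
        rw [if_neg (fun h => hne h.symm), if_pos rfl, if_neg (not_not_intro hC)]
        ring
      · have h3 : ¬ BB_Cst σ := by rintro (h|h) <;> [exact h1 h; exact h2 h]
        rw [if_neg h1, if_neg h2, if_pos h3]
        ring
  rw [Finset.sum_congr rfl (fun σ _ => hsplit σ), Finset.sum_add_distrib]
  congr 1
  rw [Finset.sum_add_distrib]
  have e1 : (∑ σ : Fin m → Bool, if σ = (fun _ => true) then gg σ else 0)
      = gg (fun _ => true) := by
    rw [Finset.sum_ite_eq' Finset.univ (fun _ => true) gg]
    simp
  have e2 : (∑ σ : Fin m → Bool, if σ = (fun _ => false) then gg σ else 0)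
      = gg (fun _ => false) := by
    rw [Finset.sum_ite_eq' Finset.univ (fun _ => false) gg]
    simp
  rw [e1, e2, hT, hF]
  norm_num

lemma BB_arith (m : ℕ) (hm : 2 ≤ m) (u E G F : ℝ) (hu : 0 < u) (hE : 0 < E)
    (hEu : E * u = 1) (hcase : 2*(m:ℝ)^2 ≤ m + E) (hG0 : 0 ≤ G)
    (hG : G ≤ 2*((1+u^2)^m - 1)) (hF : F = 2 + G) :
    2*(G*F) ≤ 4*(m:ℝ)^2/((m:ℝ)+E) := by
  have hm2 : (2:ℝ) ≤ (m:ℝ) := by exact_mod_cast hm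
  have hmpos : (0:ℝ) < m := by linarith
  have hEge : 2*(m:ℝ)^2 - m ≤ E := by linarith
  have huE : u * E = 1 := by linarith [hEu]
  have hule : u * (2*(m:ℝ)^2 - m) ≤ 1 := by
    calc u * (2*(m:ℝ)^2 - m) ≤ u * E := mul_le_mul_of_nonneg_left hEge hu.le
      _ = 1 := huE
  have h6 : (6:ℝ) ≤ 2*(m:ℝ)^2 - m := by
    have h := mul_nonneg (by linarith : (0:ℝ) ≤ (m:ℝ) - 2) (by linarith : (0:ℝ) ≤ 2*(m:ℝ) + 3)
    have heq : ((m:ℝ) - 2) * (2*(m:ℝ) + 3) = 2*(m:ℝ)^2 - m - 6 := by ring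
    linarith
  have hu6 : u ≤ 1/6 := by
    have h := mul_le_mul_of_nonneg_left h6 hu.le
    linarith
  have hmu : (m:ℝ)*u ≤ 1/3 := by
    have h3M : (3:ℝ) ≤ 2*(m:ℝ) - 1 := by linarith
    have hMu0 : (0:ℝ) ≤ (m:ℝ)*u := by positivity
    have h := mul_le_mul_of_nonneg_left h3M hMu0
    have heq : ((m:ℝ)*u) * (2*(m:ℝ) - 1) = u * (2*(m:ℝ)^2 - m) := by ring
    linarith
  have hmu2 : (m:ℝ)*u^2 ≤ 1/18 := by
    have h := mul_le_mul_of_nonneg_right hmu hu.le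
    have heq : ((m:ℝ)*u)*u = (m:ℝ)*u^2 := by ring
    have h2 := mul_le_mul_of_nonneg_left hu6 (by norm_num : (0:ℝ) ≤ 1/3)
    linarith
  have hmu2' : (m:ℝ)*(u^2) < 1 := by linarith
  have hpow : (1+u^2)^m * (1 - (m:ℝ)*(u^2)) ≤ 1 := BB_pow_bound m (u^2) (by positivity) hmu2'
  have hP0 : (0:ℝ) ≤ (1+u^2)^m := by positivity
  set q : ℝ := (m:ℝ)*u^2 with hqdef
  generalize hPd : ((1:ℝ)+u^2)^m = P at hG hpow hP0
  have hq0 : (0:ℝ) ≤ q := by positivity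
  have hPq : P - P*q ≤ 1 := by
    have hexpand : P*(1 - q) = P - P*q := by ring
    linarith
  have hPq2 : P*q ≤ P*(1/18) := mul_le_mul_of_nonneg_left hmu2 hP0
  have hP17 : P ≤ 18/17 := by linarith
  have hPq3 : P*q ≤ (18/17)*q := mul_le_mul_of_nonneg_right hP17 hq0
  have hGb : G ≤ (36/17) * q := by linarith
  have hGsmall : G ≤ 2/17 := by
    calc G ≤ (36/17)*q := hGb
      _ ≤ (36/17)*(1/18) := by
          apply mul_le_mul_of_nonneg_left hmu2 (by norm_num)
      _ = 2/17 := by norm_num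
  have hFb : F ≤ 36/17 := by linarith
  have hF0 : 0 ≤ F := by linarith
  have hGF : G * F ≤ ((36/17) * q) * (36/17) :=
    mul_le_mul hGb hFb hF0 (by positivity)
  have h2GF : 2*(G*F) ≤ 9*q := by
    have h1 : 2*(G*F) ≤ 2*(((36/17) * q) * (36/17)) := by linarith
    have h2 : 2*(((36/17) * q) * (36/17)) = (2592/289)*q := by ring
    have h3 : (2592/289)*q ≤ 9*q := mul_le_mul_of_nonneg_right (by norm_num) hq0
    linarith
  have h9u : 9*q ≤ 3*u := by
    have h := mul_le_mul_of_nonneg_right hmu hu.le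
    have heq : ((m:ℝ)*u)*u = q := by rw [hqdef]; ring
    linarith
  have hM4 : (4:ℝ) ≤ (m:ℝ)^2 := by
    have h22 := mul_le_mul hm2 hm2 (by norm_num : (0:ℝ) ≤ 2) (by linarith : (0:ℝ) ≤ (m:ℝ))
    have heq : (m:ℝ)*(m:ℝ) = (m:ℝ)^2 := by ring
    linarith
  have hfinal : 3*u ≤ 4*(m:ℝ)^2/((m:ℝ)+E) := by
    rw [le_div_iff₀ (by linarith)]
    have hum : u*(m:ℝ) ≤ 1/3 := by linarith [hmu]
    have hexp : 3*u*((m:ℝ)+E) = 3*(u*(m:ℝ)) + 3*(u*E) := by ring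
    rw [hexp, huE]
    linarith
  linarith


lemma BB_quad {m : ℕ} (f : Fin m → ℝ) :
    (∑ k, ∑ k', if k ≠ k' then f k * f k' else 0)
      = (∑ k, f k)^2 - ∑ k, f k * f k := by
  have h1 : ∀ k, (∑ k', if k ≠ k' then f k * f k' else 0)
      = (∑ k', f k * f k') - f k * f k := by
    intro k
    have h2 : ∀ k', (if k ≠ k' then f k * f k' else 0)
        = f k * f k' - (if k = k' then f k * f k' else 0) := by
      intro k'; by_cases h : k = k' <;> simp [h]
    rw [Finset.sum_congr rfl (fun k' _ => h2 k'), Finset.sum_sub_distrib,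
      Finset.sum_ite_eq Finset.univ k (fun k' => f k * f k')]
    simp
  rw [Finset.sum_congr rfl (fun k _ => h1 k), Finset.sum_sub_distrib]
  have h3 : ∑ k : Fin m, ∑ k', f k * f k' = (∑ k, f k)^2 := by
    rw [← Finset.sum_mul_sum]; ring
  rw [h3]

lemma BB_energy_eq {p m : ℕ} (a b : Fin m → Fin p) (ha : Function.Injective a)
    (hb : Function.Injective b) (hab : ∀ k k', a k ≠ b k')
    (G : SimpleGraph (Fin p))
    (hG : ∀ u w, G.Adj u w ↔
      (u ≠ w ∧ ((∃ k k', u = a k ∧ w = a k') ∨ (∃ k k', u = b k ∧ w = b k'))) ∨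
      (∃ k, (u = a k ∧ w = b k) ∨ (u = b k ∧ w = a k)))
    (x : Fin p → Bool) :
    isingEnergy G x = patH (x ∘ a, x ∘ b) := by
  have hAA : ∀ k k', G.Adj (a k) (a k') ↔ k ≠ k' := by
    intro k k'
    rw [hG]
    constructor
    · rintro (⟨hne, -⟩ | ⟨k0, ⟨-, h2⟩ | ⟨h1, -⟩⟩)
      · exact fun h => hne (by rw [h])
      · exact absurd h2 (hab k' k0)
      · exact absurd h1 (hab k k0)
    · intro hkk'
      exact Or.inl ⟨fun h => hkk' (ha h), Or.inl ⟨k, k', rfl, rfl⟩⟩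
  have hBB : ∀ k k', G.Adj (b k) (b k') ↔ k ≠ k' := by
    intro k k'
    rw [hG]
    constructor
    · rintro (⟨hne, -⟩ | ⟨k0, ⟨h1, -⟩ | ⟨-, h2⟩⟩)
      · exact fun h => hne (by rw [h])
      · exact absurd h1.symm (hab k0 k)
      · exact absurd h2.symm (hab k0 k')
    · intro hkk'
      exact Or.inl ⟨fun h => hkk' (hb h), Or.inr ⟨k, k', rfl, rfl⟩⟩
  have hAB : ∀ k k', G.Adj (a k) (b k') ↔ k = k' := by
    intro k k'
    rw [hG]
    constructor
    · rintro (⟨-, ⟨k1, k2, -, h2⟩ | ⟨k1, k2, h1, -⟩⟩ | ⟨k0, ⟨h1, h2⟩ | ⟨h1, -⟩⟩)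
      · exact absurd h2.symm (hab k2 k')
      · exact absurd h1 (hab k k1)
      · exact (ha h1).trans (hb h2).symm
      · exact absurd h1 (hab k k0)
    · rintro rfl
      exact Or.inr ⟨k, Or.inl ⟨rfl, rfl⟩⟩
  have hBA : ∀ k k', G.Adj (b k) (a k') ↔ k = k' := by
    intro k k'
    rw [hG]
    constructor
    · rintro (⟨-, ⟨k1, k2, h1, -⟩ | ⟨k1, k2, -, h2⟩⟩ | ⟨k0, ⟨h1, -⟩ | ⟨h1, h2⟩⟩)
      · exact absurd h1.symm (hab k1 k)
      · exact absurd h2 (hab k' k2)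
      · exact absurd h1.symm (hab k0 k)
      · exact (hb h1).trans (ha h2).symm
    · rintro rfl
      exact Or.inr ⟨k, Or.inr ⟨rfl, rfl⟩⟩
  have hadj_mem : ∀ u w, G.Adj u w →
      u ∈ (Finset.univ : Finset (Fin m ⊕ Fin m)).image (Sum.elim a b) := by
    intro u w h
    rw [hG] at h
    have : ∃ z : Fin m ⊕ Fin m, u = Sum.elim a b z := by
      rcases h with ⟨-, ⟨k, k', h1, -⟩ | ⟨k, k', h1, -⟩⟩ | ⟨k, ⟨h1, -⟩ | ⟨h1, -⟩⟩
      exacts [⟨Sum.inl k, h1⟩, ⟨Sum.inr k, h1⟩, ⟨Sum.inl k, h1⟩, ⟨Sum.inr k, h1⟩]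
    obtain ⟨z, hz⟩ := this
    exact Finset.mem_image.mpr ⟨z, Finset.mem_univ z, hz.symm⟩
  have hcinj : Function.Injective (Sum.elim a b : Fin m ⊕ Fin m → Fin p) := by
    rintro (k|k) (k'|k') h <;> simp only [Sum.elim_inl, Sum.elim_inr] at h
    · exact congrArg Sum.inl (ha h)
    · exact absurd h (hab k k')
    · exact absurd h.symm (hab k' k)
    · exact congrArg Sum.inr (hb h)
  set T : Fin p → Fin p → ℝ :=
    fun u w => if G.Adj u w then confVal (x u) * confVal (x w) else 0 with hT
  have hTu : ∀ u w, u ∉ (Finset.univ : Finset (Fin m ⊕ Fin m)).image (Sum.elim a b) →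
      T u w = 0 := by
    intro u w hu
    rw [hT]
    simp only
    rw [if_neg]
    intro hadj
    exact hu (hadj_mem u w hadj)
  have hTw : ∀ u w, w ∉ (Finset.univ : Finset (Fin m ⊕ Fin m)).image (Sum.elim a b) →
      T u w = 0 := by
    intro u w hw
    rw [hT]
    simp only
    rw [if_neg]
    intro hadj
    exact hw (hadj_mem w u hadj.symm)
  have inner : ∀ u, (∑ w : Fin p, T u w) = ∑ z' : Fin m ⊕ Fin m, T u (Sum.elim a b z') := by
    intro u
    rw [← Finset.sum_subset
      (Finset.subset_univ ((Finset.univ : Finset (Fin m ⊕ Fin m)).image (Sum.elim a b)))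
      (fun w _ hw => hTw u w hw)]
    rw [Finset.sum_image (fun z _ z' _ h => hcinj h)]
  have outer : ∀ z' : Fin m ⊕ Fin m, (∑ u : Fin p, T u (Sum.elim a b z'))
      = ∑ z : Fin m ⊕ Fin m, T (Sum.elim a b z) (Sum.elim a b z') := by
    intro z'
    rw [← Finset.sum_subset
      (Finset.subset_univ ((Finset.univ : Finset (Fin m ⊕ Fin m)).image (Sum.elim a b)))
      (fun u _ hu => hTu u _ hu)]
    rw [Finset.sum_image (fun z _ z'' _ h => hcinj h)]
  have step1 : (∑ u : Fin p, ∑ w : Fin p, T u w)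
      = ∑ z : Fin m ⊕ Fin m, ∑ z' : Fin m ⊕ Fin m, T (Sum.elim a b z) (Sum.elim a b z') := by
    calc (∑ u : Fin p, ∑ w : Fin p, T u w)
        = ∑ u : Fin p, ∑ z' : Fin m ⊕ Fin m, T u (Sum.elim a b z') :=
          Finset.sum_congr rfl (fun u _ => inner u)
      _ = ∑ z' : Fin m ⊕ Fin m, ∑ u : Fin p, T u (Sum.elim a b z') := Finset.sum_comm
      _ = ∑ z' : Fin m ⊕ Fin m, ∑ z : Fin m ⊕ Fin m, T (Sum.elim a b z) (Sum.elim a b z') :=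
          Finset.sum_congr rfl (fun z' _ => outer z')
      _ = _ := Finset.sum_comm
  have expand : (∑ z : Fin m ⊕ Fin m, ∑ z' : Fin m ⊕ Fin m, T (Sum.elim a b z) (Sum.elim a b z'))
      = ((∑ k, ∑ k', T (a k) (a k')) + (∑ k, ∑ k', T (a k) (b k')))
        + ((∑ k, ∑ k', T (b k) (a k')) + (∑ k, ∑ k', T (b k) (b k'))) := by
    rw [Fintype.sum_sum_type]
    rw [Finset.sum_congr rfl (fun k (_ : k ∈ Finset.univ) =>
      Fintype.sum_sum_type (fun z' => T (Sum.elim a b (Sum.inl k)) (Sum.elim a b z')))]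
    rw [Finset.sum_congr rfl (fun k (_ : k ∈ Finset.univ) =>
      Fintype.sum_sum_type (fun z' => T (Sum.elim a b (Sum.inr k)) (Sum.elim a b z')))]
    rw [Finset.sum_add_distrib, Finset.sum_add_distrib]
    simp only [Sum.elim_inl, Sum.elim_inr]
  have qAA : (∑ k, ∑ k', T (a k) (a k')) = (patS (x ∘ a))^2 - m := by
    have h1 : ∀ k k' : Fin m, T (a k) (a k')
        = if k ≠ k' then confVal (x (a k)) * confVal (x (a k')) else 0 := by
      intro k k'
      rw [hT]
      simp only
      by_cases h : k = k'
      · rw [if_neg (fun hadj => ((hAA k k').mp hadj) h), if_neg (by simpa using h)]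
      · rw [if_pos ((hAA k k').mpr h), if_pos h]
    rw [Finset.sum_congr rfl (fun k _ => Finset.sum_congr rfl (fun k' _ => h1 k k'))]
    rw [BB_quad (fun k => confVal (x (a k)))]
    have h2 : (∑ k : Fin m, confVal (x (a k)) * confVal (x (a k))) = m := by
      rw [Finset.sum_congr rfl (fun k _ => BB_confVal_mul_self (x (a k)))]
      simp
    rw [h2]
    rfl
  have qBB : (∑ k, ∑ k', T (b k) (b k')) = (patS (x ∘ b))^2 - m := by
    have h1 : ∀ k k' : Fin m, T (b k) (b k')
        = if k ≠ k' then confVal (x (b k)) * confVal (x (b k')) else 0 := by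
      intro k k'
      rw [hT]
      simp only
      by_cases h : k = k'
      · rw [if_neg (fun hadj => ((hBB k k').mp hadj) h), if_neg (by simpa using h)]
      · rw [if_pos ((hBB k k').mpr h), if_pos h]
    rw [Finset.sum_congr rfl (fun k _ => Finset.sum_congr rfl (fun k' _ => h1 k k'))]
    rw [BB_quad (fun k => confVal (x (b k)))]
    have h2 : (∑ k : Fin m, confVal (x (b k)) * confVal (x (b k))) = m := by
      rw [Finset.sum_congr rfl (fun k _ => BB_confVal_mul_self (x (b k)))]
      simp
    rw [h2]
    rfl
  have qAB : (∑ k, ∑ k', T (a k) (b k')) = patM (x ∘ a) (x ∘ b) := by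
    have h1 : ∀ k k' : Fin m, T (a k) (b k')
        = if k = k' then confVal (x (a k)) * confVal (x (b k')) else 0 := by
      intro k k'
      rw [hT]
      simp only
      by_cases h : k = k'
      · rw [if_pos ((hAB k k').mpr h), if_pos h]
      · rw [if_neg (fun hadj => h ((hAB k k').mp hadj)), if_neg h]
    rw [Finset.sum_congr rfl (fun k _ => Finset.sum_congr rfl (fun k' _ => h1 k k'))]
    rw [Finset.sum_congr rfl (fun k (_ : k ∈ Finset.univ) =>
      Finset.sum_ite_eq Finset.univ k (fun k' => confVal (x (a k)) * confVal (x (b k'))))]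
    simp only [Finset.mem_univ, if_true]
    rfl
  have qBA : (∑ k, ∑ k', T (b k) (a k')) = patM (x ∘ a) (x ∘ b) := by
    have h1 : ∀ k k' : Fin m, T (b k) (a k')
        = if k = k' then confVal (x (b k)) * confVal (x (a k')) else 0 := by
      intro k k'
      rw [hT]
      simp only
      by_cases h : k = k'
      · rw [if_pos ((hBA k k').mpr h), if_pos h]
      · rw [if_neg (fun hadj => h ((hBA k k').mp hadj)), if_neg h]
    rw [Finset.sum_congr rfl (fun k _ => Finset.sum_congr rfl (fun k' _ => h1 k k'))]
    rw [Finset.sum_congr rfl (fun k (_ : k ∈ Finset.univ) =>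
      Finset.sum_ite_eq Finset.univ k (fun k' => confVal (x (b k)) * confVal (x (a k'))))]
    simp only [Finset.mem_univ, if_true]
    unfold patM
    exact Finset.sum_congr rfl (fun k _ => mul_comm _ _)
  unfold isingEnergy
  rw [step1, expand, qAA, qBB, qAB, qBA]
  unfold patH
  simp only
  ring


def BB_ovr {p m : ℕ} (a b : Fin m → Fin p) (σ τ : Fin m → Bool)
    (x : Fin p → Bool) : Fin p → Bool :=
  fun v => if h1 : ∃ k, v = a k then σ h1.choose
    else if h2 : ∃ k, v = b k then τ h2.choose else x v

lemma BB_ovr_a {p m : ℕ} {a b : Fin m → Fin p} (ha : Function.Injective a)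
    (σ τ : Fin m → Bool) (x : Fin p → Bool) (k : Fin m) :
    BB_ovr a b σ τ x (a k) = σ k := by
  have h1 : ∃ k', a k = a k' := ⟨k, rfl⟩
  simp only [BB_ovr]
  rw [dif_pos h1]
  exact congrArg σ (ha h1.choose_spec).symm

lemma BB_ovr_b {p m : ℕ} {a b : Fin m → Fin p} (hb : Function.Injective b)
    (hab : ∀ k k', a k ≠ b k') (σ τ : Fin m → Bool) (x : Fin p → Bool) (k : Fin m) :
    BB_ovr a b σ τ x (b k) = τ k := by
  have h1 : ¬ ∃ k', b k = a k' := by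
    rintro ⟨k', hk'⟩
    exact hab k' k hk'.symm
  have h2 : ∃ k', b k = b k' := ⟨k, rfl⟩
  simp only [BB_ovr]
  rw [dif_neg h1, dif_pos h2]
  exact congrArg τ (hb h2.choose_spec).symm

lemma BB_ovr_comp_a {p m : ℕ} {a b : Fin m → Fin p} (ha : Function.Injective a)
    (σ τ : Fin m → Bool) (x : Fin p → Bool) :
    (BB_ovr a b σ τ x) ∘ a = σ :=
  funext (fun k => BB_ovr_a ha σ τ x k)

lemma BB_ovr_comp_b {p m : ℕ} {a b : Fin m → Fin p} (hb : Function.Injective b)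
    (hab : ∀ k k', a k ≠ b k') (σ τ : Fin m → Bool) (x : Fin p → Bool) :
    (BB_ovr a b σ τ x) ∘ b = τ :=
  funext (fun k => BB_ovr_b hb hab σ τ x k)

lemma BB_ovr_ovr {p m : ℕ} {a b : Fin m → Fin p} (ha : Function.Injective a)
    (hb : Function.Injective b) (hab : ∀ k k', a k ≠ b k')
    (σ τ : Fin m → Bool) (x : Fin p → Bool) :
    BB_ovr a b (x ∘ a) (x ∘ b) (BB_ovr a b σ τ x) = x := by
  funext v
  by_cases h1 : ∃ k, v = a k
  · obtain ⟨k, rfl⟩ := h1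
    rw [BB_ovr_a ha]
    rfl
  · by_cases h2 : ∃ k, v = b k
    · obtain ⟨k, rfl⟩ := h2
      rw [BB_ovr_b hb hab]
      rfl
    · simp only [BB_ovr, dif_neg h1, dif_neg h2]

lemma BB_sum_factor {p m : ℕ} (a b : Fin m → Fin p) (ha : Function.Injective a)
    (hb : Function.Injective b) (hab : ∀ k k', a k ≠ b k') :
    ∃ N : ℕ, 0 < N ∧ ∀ val : (Fin m → Bool) × (Fin m → Bool) → ℝ,
      (∑ x : Fin p → Bool, val (x ∘ a, x ∘ b))
        = N * ∑ y : (Fin m → Bool) × (Fin m → Bool), val y := by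
  set cT : Fin m → Bool := fun _ => true with hcT
  set g : (Fin p → Bool) → (Fin m → Bool) × (Fin m → Bool) := fun x => (x ∘ a, x ∘ b) with hg
  have hmem : ∀ (σ τ : Fin m → Bool) (x : Fin p → Bool), g (BB_ovr a b σ τ x) = (σ, τ) := by
    intro σ τ x
    rw [hg]
    exact Prod.ext (BB_ovr_comp_a ha σ τ x) (BB_ovr_comp_b hb hab σ τ x)
  have hfib : ∀ y : (Fin m → Bool) × (Fin m → Bool),
      (univ.filter fun x : Fin p → Bool => g x = y).card
        = (univ.filter fun x : Fin p → Bool => g x = (cT, cT)).card := by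
    intro y
    apply Finset.card_bij' (i := fun x _ => BB_ovr a b cT cT x)
      (j := fun x _ => BB_ovr a b y.1 y.2 x)
    · intro x hx
      rw [Finset.mem_filter]
      exact ⟨Finset.mem_univ _, hmem cT cT x⟩
    · intro x hx
      rw [Finset.mem_filter]
      refine ⟨Finset.mem_univ _, ?_⟩
      rw [hmem y.1 y.2 x]
    · intro x hx
      rw [Finset.mem_filter] at hx
      have h1 : x ∘ a = y.1 := congrArg Prod.fst hx.2
      have h2 : x ∘ b = y.2 := congrArg Prod.snd hx.2
      have h3 := BB_ovr_ovr ha hb hab cT cT x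
      rw [h1, h2] at h3
      exact h3
    · intro x hx
      rw [Finset.mem_filter] at hx
      have h1 : x ∘ a = cT := congrArg Prod.fst hx.2
      have h2 : x ∘ b = cT := congrArg Prod.snd hx.2
      have h3 := BB_ovr_ovr ha hb hab y.1 y.2 x
      rw [h1, h2] at h3
      exact h3
  refine ⟨(univ.filter fun x : Fin p → Bool => g x = (cT, cT)).card, ?_, ?_⟩
  · rw [Finset.card_pos]
    exact ⟨BB_ovr a b cT cT (fun _ => false),
      Finset.mem_filter.mpr ⟨Finset.mem_univ _, hmem cT cT _⟩⟩
  · intro val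
    have hLHS : (∑ x : Fin p → Bool, val (x ∘ a, x ∘ b)) = ∑ x : Fin p → Bool, val (g x) := rfl
    rw [hLHS, Finset.sum_comp val g]
    have himg : (Finset.univ : Finset (Fin p → Bool)).image g = Finset.univ := by
      apply Finset.eq_univ_of_forall
      intro y
      exact Finset.mem_image.mpr ⟨BB_ovr a b y.1 y.2 (fun _ => false), Finset.mem_univ _,
        by rw [hmem y.1 y.2]⟩
    rw [himg]
    rw [Finset.sum_congr rfl (fun y (_ : y ∈ Finset.univ) => by rw [hfib y])]
    rw [← Finset.smul_sum, nsmul_eq_mul]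


/-- Correlation lower bound between any two distinct vertices of
the building block of Ensemble 3. -/
theorem building_block_corr_lower {p m : ℕ} (lam : ℝ) (hlam : 0 < lam)
    (hm : 2 ≤ m) (hp : 2 * m ≤ p)
    (a b : Fin m → Fin p)
    (ha : Function.Injective a) (hb : Function.Injective b)
    (hab : ∀ k k', a k ≠ b k')
    (G : SimpleGraph (Fin p))
    (hG : ∀ u w, G.Adj u w ↔
      (u ≠ w ∧ ((∃ k k', u = a k ∧ w = a k') ∨ (∃ k k', u = b k ∧ w = b k'))) ∨
      (∃ k, (u = a k ∧ w = b k) ∨ (u = b k ∧ w = a k)))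
    (i j : Fin p) (hij : i ≠ j)
    (hi : (∃ k, i = a k) ∨ (∃ k, i = b k))
    (hj : (∃ k, j = a k) ∨ (∃ k, j = b k)) :
    isingCorr lam G i j ≥
      1 - 4 * (m : ℝ) ^ 2 / ((m : ℝ) + Real.exp (lam * ((m : ℝ) - 1) / 2)) -
        2 / (1 + Real.exp (2 * (m : ℝ) * lam)) := by

  classical
  have hZpos : 0 < isingZ lam G :=
    Finset.sum_pos (fun x _ => Real.exp_pos _) Finset.univ_nonempty
  have hPsum : (∑ x : Fin p → Bool, isingP lam G x) = 1 := by
    unfold isingP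
    rw [← Finset.sum_div]
    exact div_self (ne_of_gt hZpos)
  have hcorr_ge : -1 ≤ isingCorr lam G i j := by
    unfold isingCorr
    have hbd : ∀ x : Fin p → Bool,
        -(isingP lam G x) ≤ isingP lam G x * (confVal (x i) * confVal (x j)) := by
      intro x
      have hP : 0 ≤ isingP lam G x := div_nonneg (Real.exp_pos _).le hZpos.le
      have h1 : -1 ≤ confVal (x i) * confVal (x j) := by
        cases x i <;> cases x j <;> simp [confVal]
      nlinarith
    calc (-1 : ℝ) = -(∑ x : Fin p → Bool, isingP lam G x) := by rw [hPsum]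
      _ = ∑ x : Fin p → Bool, -(isingP lam G x) := by rw [Finset.sum_neg_distrib]
      _ ≤ _ := Finset.sum_le_sum (fun x _ => hbd x)
  by_cases hcase : 2*(m:ℝ)^2 ≤ (m:ℝ) + Real.exp (lam * ((m:ℝ) - 1) / 2)
  swap
  · push_neg at hcase
    have hmE : 0 < (m:ℝ) + Real.exp (lam * ((m:ℝ) - 1) / 2) := by positivity
    have h4 : 2 < 4*(m:ℝ)^2/((m:ℝ) + Real.exp (lam * ((m:ℝ) - 1) / 2)) := by
      rw [lt_div_iff₀ hmE]
      linarith
    have h5 : 0 < 2/(1 + Real.exp (2*(m:ℝ)*lam)) := by positivity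
    have h6 : 4 * (m : ℝ) ^ 2 / ((m : ℝ) + Real.exp (lam * ((m : ℝ) - 1) / 2))
        = 4*(m:ℝ)^2/((m:ℝ) + Real.exp (lam * ((m:ℝ) - 1) / 2)) := by ring_nf
    rw [ge_iff_le]
    linarith
  · have hm0 : 0 < m := by omega
    obtain ⟨N, hN, hkey⟩ := BB_sum_factor a b ha hb hab
    have hNR : (0:ℝ) < (N:ℝ) := by exact_mod_cast hN
    set SZ : ℝ := ∑ y : (Fin m → Bool) × (Fin m → Bool), Real.exp (lam * patH y) with hSZ
    have hSZpos : 0 < SZ :=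
      Finset.sum_pos (fun y _ => Real.exp_pos _) Finset.univ_nonempty
    have hZeq : isingZ lam G = N * SZ := by
      unfold isingZ
      rw [Finset.sum_congr rfl (fun x (_ : x ∈ Finset.univ) => by
        rw [BB_energy_eq a b ha hb hab G hG x])]
      exact hkey (fun y => Real.exp (lam * patH y))
    obtain ⟨pi, hpi, hpic⟩ : ∃ pi : ((Fin m → Bool) × (Fin m → Bool)) → Bool,
        (∀ x : Fin p → Bool, x i = pi (x ∘ a, x ∘ b))
          ∧ (∀ (c : Bool) (y : (Fin m → Bool) × (Fin m → Bool)),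
              y.1 = (fun _ => c) → y.2 = (fun _ => c) → pi y = c) := by
      rcases hi with ⟨k, hk⟩ | ⟨k, hk⟩
      · exact ⟨fun y => y.1 k, fun x => by rw [hk]; rfl, fun c y h1 h2 => by show y.1 k = c; rw [h1]⟩
      · exact ⟨fun y => y.2 k, fun x => by rw [hk]; rfl, fun c y h1 h2 => by show y.2 k = c; rw [h2]⟩
    obtain ⟨pj, hpj, hpjc⟩ : ∃ pj : ((Fin m → Bool) × (Fin m → Bool)) → Bool,
        (∀ x : Fin p → Bool, x j = pj (x ∘ a, x ∘ b))
          ∧ (∀ (c : Bool) (y : (Fin m → Bool) × (Fin m → Bool)),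
              y.1 = (fun _ => c) → y.2 = (fun _ => c) → pj y = c) := by
      rcases hj with ⟨k, hk⟩ | ⟨k, hk⟩
      · exact ⟨fun y => y.1 k, fun x => by rw [hk]; rfl, fun c y h1 h2 => by show y.1 k = c; rw [h1]⟩
      · exact ⟨fun y => y.2 k, fun x => by rw [hk]; rfl, fun c y h1 h2 => by show y.2 k = c; rw [h2]⟩
    have hcorr_eq : isingCorr lam G i j
        = (∑ y : (Fin m → Bool) × (Fin m → Bool),
            Real.exp (lam * patH y) * (if pi y = pj y then (1:ℝ) else -1)) / SZ := by
      unfold isingCorr isingP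
      have hterm : ∀ x : Fin p → Bool,
          Real.exp (lam * isingEnergy G x) / isingZ lam G * (confVal (x i) * confVal (x j))
            = (fun y : (Fin m → Bool) × (Fin m → Bool) =>
                Real.exp (lam * patH y) * (if pi y = pj y then (1:ℝ) else -1)) (x ∘ a, x ∘ b)
              / ((N:ℝ) * SZ) := by
        intro x
        simp only
        rw [BB_energy_eq a b ha hb hab G hG x, hZeq, BB_confVal_mul_eq]
        simp only [hpi x, hpj x]
        ring
      rw [Finset.sum_congr rfl (fun x (_ : x ∈ Finset.univ) => hterm x), ← Finset.sum_div,
        hkey (fun y => Real.exp (lam * patH y) * (if pi y = pj y then (1:ℝ) else -1)),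
        mul_div_mul_left _ _ (ne_of_gt hNR)]
    set SD : ℝ := ∑ y : (Fin m → Bool) × (Fin m → Bool),
      (if pi y = pj y then 0 else Real.exp (lam * patH y)) with hSD
    have hsum_q : (∑ y : (Fin m → Bool) × (Fin m → Bool),
        Real.exp (lam * patH y) * (if pi y = pj y then (1:ℝ) else -1)) = SZ - 2*SD := by
      rw [hSZ, hSD, Finset.mul_sum, ← Finset.sum_sub_distrib]
      apply Finset.sum_congr rfl
      intro y _
      by_cases h : pi y = pj y
      · rw [if_pos h, if_pos h]
        ring
      · rw [if_neg h, if_neg h]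
        ring
    have hSD0 : 0 ≤ SD := by
      rw [hSD]
      apply Finset.sum_nonneg
      intro y _
      by_cases h : pi y = pj y
      · rw [if_pos h]
      · rw [if_neg h]
        exact (Real.exp_pos _).le
    have hcorr2 : isingCorr lam G i j = 1 - 2*(SD/SZ) := by
      rw [hcorr_eq, hsum_q, sub_div, div_self (ne_of_gt hSZpos), mul_div_assoc]
    -- event sums
    set SEA : ℝ := ∑ y : (Fin m → Bool) × (Fin m → Bool),
      (if ¬ BB_Cst y.1 then Real.exp (lam * patH y) else 0) with hSEA
    set SEB : ℝ := ∑ y : (Fin m → Bool) × (Fin m → Bool),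
      (if ¬ BB_Cst y.2 then Real.exp (lam * patH y) else 0) with hSEB
    set SAN : ℝ := ∑ y : (Fin m → Bool) × (Fin m → Bool),
      (if (y.1 = (fun _ => true) ∧ y.2 = (fun _ => false))
         ∨ (y.1 = (fun _ => false) ∧ y.2 = (fun _ => true))
       then Real.exp (lam * patH y) else 0) with hSAN
    have hSAN0 : 0 ≤ SAN := by
      rw [hSAN]
      apply Finset.sum_nonneg
      intro y _
      split
      · exact (Real.exp_pos _).le
      · exact le_refl 0
    have hSD_le : SD ≤ SEA + SEB + SAN := by
      rw [hSD, hSEA, hSEB, hSAN, ← Finset.sum_add_distrib, ← Finset.sum_add_distrib]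
      apply Finset.sum_le_sum
      intro y _
      have t1 : 0 ≤ (if ¬ BB_Cst y.1 then Real.exp (lam * patH y) else 0) := by
        split
        · exact (Real.exp_pos _).le
        · exact le_refl 0
      have t2 : 0 ≤ (if ¬ BB_Cst y.2 then Real.exp (lam * patH y) else 0) := by
        split
        · exact (Real.exp_pos _).le
        · exact le_refl 0
      have t3 : 0 ≤ (if (y.1 = (fun _ => true) ∧ y.2 = (fun _ => false))
          ∨ (y.1 = (fun _ => false) ∧ y.2 = (fun _ => true))
          then Real.exp (lam * patH y) else 0) := by
        split
        · exact (Real.exp_pos _).le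
        · exact le_refl 0
      by_cases hpq : pi y = pj y
      · rw [if_pos hpq]
        linarith
      · rw [if_neg hpq]
        by_cases h1 : BB_Cst y.1
        · by_cases h2 : BB_Cst y.2
          · rcases h1 with h1 | h1 <;> rcases h2 with h2 | h2
            · exact absurd (by rw [hpic true y h1 h2, hpjc true y h1 h2]) hpq
            · have hA : (y.1 = (fun _ => true) ∧ y.2 = (fun _ => false))
                  ∨ (y.1 = (fun _ => false) ∧ y.2 = (fun _ => true)) := Or.inl ⟨h1, h2⟩
              rw [if_neg (not_not_intro (show BB_Cst y.1 from Or.inl h1)),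
                if_neg (not_not_intro (show BB_Cst y.2 from Or.inr h2)), if_pos hA]
              linarith
            · have hA : (y.1 = (fun _ => true) ∧ y.2 = (fun _ => false))
                  ∨ (y.1 = (fun _ => false) ∧ y.2 = (fun _ => true)) := Or.inr ⟨h1, h2⟩
              rw [if_neg (not_not_intro (show BB_Cst y.1 from Or.inr h1)),
                if_neg (not_not_intro (show BB_Cst y.2 from Or.inl h2)), if_pos hA]
              linarith
            · exact absurd (by rw [hpic false y h1 h2, hpjc false y h1 h2]) hpq
          · rw [if_pos h2]
            linarith
        · rw [if_pos h1]
          linarith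
    have hcTF : ((fun _ => true) : Fin m → Bool) ≠ (fun _ => false) := by
      intro h
      exact Bool.noConfusion (congrFun h ⟨0, hm0⟩)
    have hSAN_eq : SAN = 2 * Real.exp (lam * ((m:ℝ)^2 - 2*(m:ℝ))) := by
      rw [hSAN]
      have hpt : ∀ y : (Fin m → Bool) × (Fin m → Bool),
          (if (y.1 = (fun _ => true) ∧ y.2 = (fun _ => false))
             ∨ (y.1 = (fun _ => false) ∧ y.2 = (fun _ => true))
           then Real.exp (lam * patH y) else 0)
          = (if y = ((fun _ => true), (fun _ => false)) then Real.exp (lam * patH y) else 0)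
            + (if y = ((fun _ => false), (fun _ => true)) then Real.exp (lam * patH y) else 0) := by
        intro y
        by_cases hA : y = ((fun _ => true), (fun _ => false))
        · have hB : y ≠ ((fun _ => false), (fun _ => true)) := by
            rw [hA]
            intro h
            exact hcTF (congrArg Prod.fst h)
          have hC : (y.1 = (fun _ => true) ∧ y.2 = (fun _ => false))
              ∨ (y.1 = (fun _ => false) ∧ y.2 = (fun _ => true)) :=
            Or.inl ⟨congrArg Prod.fst hA, congrArg Prod.snd hA⟩
          rw [if_pos hC, if_pos hA, if_neg hB]
          ring
        · by_cases hB : y = ((fun _ => false), (fun _ => true))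
          · have hC : (y.1 = (fun _ => true) ∧ y.2 = (fun _ => false))
                ∨ (y.1 = (fun _ => false) ∧ y.2 = (fun _ => true)) :=
              Or.inr ⟨congrArg Prod.fst hB, congrArg Prod.snd hB⟩
            rw [if_pos hC, if_neg hA, if_pos hB]
            ring
          · have hC : ¬ ((y.1 = (fun _ => true) ∧ y.2 = (fun _ => false))
                ∨ (y.1 = (fun _ => false) ∧ y.2 = (fun _ => true))) := by
              rintro (⟨u1, u2⟩ | ⟨u1, u2⟩)
              · exact hA (Prod.ext u1 u2)
              · exact hB (Prod.ext u1 u2)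
            rw [if_neg hC, if_neg hA, if_neg hB]
            ring
      rw [Finset.sum_congr rfl (fun y _ => hpt y), Finset.sum_add_distrib,
        Finset.sum_ite_eq' Finset.univ ((fun _ => true), (fun _ => false))
          (fun y => Real.exp (lam * patH y)),
        Finset.sum_ite_eq' Finset.univ ((fun _ => false), (fun _ => true))
          (fun y => Real.exp (lam * patH y))]
      simp only [Finset.mem_univ, if_true]
      rw [BB_patH_tf, BB_patH_ft]
      ring
    have hSZ_ge : 2 * Real.exp (lam * (m:ℝ)^2) + SAN ≤ SZ := by
      have hpt : ∀ y : (Fin m → Bool) × (Fin m → Bool),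
          ((if y = ((fun _ => true), (fun _ => true)) then Real.exp (lam * patH y) else 0)
            + (if y = ((fun _ => false), (fun _ => false)) then Real.exp (lam * patH y) else 0))
            + (if (y.1 = (fun _ => true) ∧ y.2 = (fun _ => false))
               ∨ (y.1 = (fun _ => false) ∧ y.2 = (fun _ => true))
             then Real.exp (lam * patH y) else 0)
          ≤ Real.exp (lam * patH y) := by
        intro y
        have hex := (Real.exp_pos (lam * patH y)).le
        by_cases h1 : y = ((fun _ => true), (fun _ => true))
        · have h2 : y ≠ ((fun _ => false), (fun _ => false)) := by
            rw [h1]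
            intro h
            exact absurd (congrFun (congrArg Prod.fst h) ⟨0, hm0⟩) (by simp)
          have h3 : ¬ ((y.1 = (fun _ => true) ∧ y.2 = (fun _ => false))
              ∨ (y.1 = (fun _ => false) ∧ y.2 = (fun _ => true))) := by
            rw [h1]
            rintro (⟨-, u⟩ | ⟨u, -⟩)
            · exact absurd (congrFun u ⟨0, hm0⟩) (by simp)
            · exact absurd (congrFun u ⟨0, hm0⟩) (by simp)
          rw [if_pos h1, if_neg h2, if_neg h3]
          linarith
        · by_cases h2 : y = ((fun _ => false), (fun _ => false))
          · have h3 : ¬ ((y.1 = (fun _ => true) ∧ y.2 = (fun _ => false))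
                ∨ (y.1 = (fun _ => false) ∧ y.2 = (fun _ => true))) := by
              rw [h2]
              rintro (⟨u, -⟩ | ⟨-, u⟩)
              · exact absurd (congrFun u ⟨0, hm0⟩) (by simp)
              · exact absurd (congrFun u ⟨0, hm0⟩) (by simp)
            rw [if_neg h1, if_pos h2, if_neg h3]
            linarith
          · rw [if_neg h1, if_neg h2]
            split
            · linarith
            · linarith
      have e1 : (∑ y : (Fin m → Bool) × (Fin m → Bool),
          if y = ((fun _ => true), (fun _ => true)) then Real.exp (lam * patH y) else 0)
          = Real.exp (lam * (m:ℝ)^2) := by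
        rw [Finset.sum_ite_eq' Finset.univ ((fun _ => true), (fun _ => true))
          (fun y => Real.exp (lam * patH y))]
        simp only [Finset.mem_univ, if_true]
        rw [BB_patH_tt]
      have e2 : (∑ y : (Fin m → Bool) × (Fin m → Bool),
          if y = ((fun _ => false), (fun _ => false)) then Real.exp (lam * patH y) else 0)
          = Real.exp (lam * (m:ℝ)^2) := by
        rw [Finset.sum_ite_eq' Finset.univ ((fun _ => false), (fun _ => false))
          (fun y => Real.exp (lam * patH y))]
        simp only [Finset.mem_univ, if_true]
        rw [BB_patH_ff]
      calc 2 * Real.exp (lam * (m:ℝ)^2) + SAN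
          = ((∑ y : (Fin m → Bool) × (Fin m → Bool),
              if y = ((fun _ => true), (fun _ => true)) then Real.exp (lam * patH y) else 0)
            + (∑ y : (Fin m → Bool) × (Fin m → Bool),
              if y = ((fun _ => false), (fun _ => false)) then Real.exp (lam * patH y) else 0))
            + SAN := by rw [e1, e2]; ring
        _ = ∑ y : (Fin m → Bool) × (Fin m → Bool),
            (((if y = ((fun _ => true), (fun _ => true)) then Real.exp (lam * patH y) else 0)
              + (if y = ((fun _ => false), (fun _ => false)) then Real.exp (lam * patH y) else 0))
              + (if (y.1 = (fun _ => true) ∧ y.2 = (fun _ => false))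
                 ∨ (y.1 = (fun _ => false) ∧ y.2 = (fun _ => true))
               then Real.exp (lam * patH y) else 0)) := by
            rw [hSAN, ← Finset.sum_add_distrib, ← Finset.sum_add_distrib]
        _ ≤ ∑ y : (Fin m → Bool) × (Fin m → Bool), Real.exp (lam * patH y) :=
            Finset.sum_le_sum (fun y _ => hpt y)
        _ = SZ := hSZ.symm
    have h2mpos : 0 < 1 + Real.exp (2*(m:ℝ)*lam) := by positivity
    have hANTI : 2*(SAN/SZ) ≤ 2/(1 + Real.exp (2*(m:ℝ)*lam)) := by
      have hprod : Real.exp (lam * ((m:ℝ)^2 - 2*(m:ℝ))) * Real.exp (2*(m:ℝ)*lam)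
          = Real.exp (lam * (m:ℝ)^2) := by
        rw [← Real.exp_add]
        congr 1
        ring
      have hkey2 : SAN * (1 + Real.exp (2*(m:ℝ)*lam)) ≤ SZ := by
        calc SAN * (1 + Real.exp (2*(m:ℝ)*lam))
            = SAN + SAN * Real.exp (2*(m:ℝ)*lam) := by ring
          _ = SAN + 2 * (Real.exp (lam * ((m:ℝ)^2 - 2*(m:ℝ))) * Real.exp (2*(m:ℝ)*lam)) := by
              rw [hSAN_eq]; ring
          _ = SAN + 2 * Real.exp (lam * (m:ℝ)^2) := by rw [hprod]
          _ ≤ SZ := by linarith [hSZ_ge]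
      have h1 : SAN/SZ ≤ 1/(1 + Real.exp (2*(m:ℝ)*lam)) := by
        rw [div_le_div_iff₀ hSZpos h2mpos]
        linarith [hkey2]
      have h2 : 2/(1 + Real.exp (2*(m:ℝ)*lam))
          = 2*(1/(1 + Real.exp (2*(m:ℝ)*lam))) := by ring
      rw [h2]
      linarith
    -- gg sums
    set Gs : ℝ := ∑ σ : Fin m → Bool,
      (if ¬ BB_Cst σ then Real.exp (lam * ((patS σ)^2 - (m:ℝ)^2)/2) else 0) with hGs
    set Fs : ℝ := ∑ σ : Fin m → Bool, Real.exp (lam * ((patS σ)^2 - (m:ℝ)^2)/2) with hFs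
    have hGs0 : 0 ≤ Gs := by
      rw [hGs]
      apply Finset.sum_nonneg
      intro σ _
      split
      · exact (Real.exp_pos _).le
      · exact le_refl 0
    have hFs_eq : Fs = 2 + Gs := by
      rw [hFs, hGs]
      apply BB_F_eq hm0
      · rw [BB_patS_true, show lam * (((m:ℝ))^2 - (m:ℝ)^2)/2 = 0 by ring, Real.exp_zero]
      · rw [BB_patS_false, show lam * ((-(m:ℝ))^2 - (m:ℝ)^2)/2 = 0 by ring, Real.exp_zero]
    have hSEA_le : SEA ≤ Real.exp (lam * (m:ℝ)^2) * Gs * Fs := by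
      rw [hSEA, hGs, hFs]
      have step1 : ∀ y : (Fin m → Bool) × (Fin m → Bool),
          (if ¬ BB_Cst y.1 then Real.exp (lam * patH y) else 0)
          ≤ (if ¬ BB_Cst y.1 then Real.exp (lam * (m:ℝ)^2)
              * Real.exp (lam * ((patS y.1)^2 - (m:ℝ)^2)/2) else 0)
            * Real.exp (lam * ((patS y.2)^2 - (m:ℝ)^2)/2) := by
        intro y
        by_cases h : BB_Cst y.1
        · rw [if_neg (not_not_intro h), if_neg (not_not_intro h), zero_mul]
        · rw [if_pos h, if_pos h]
          exact BB_patW_le lam hlam y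
      have hsp : (∑ y : (Fin m → Bool) × (Fin m → Bool),
            (if ¬ BB_Cst y.1 then Real.exp (lam * (m:ℝ)^2)
              * Real.exp (lam * ((patS y.1)^2 - (m:ℝ)^2)/2) else 0)
            * Real.exp (lam * ((patS y.2)^2 - (m:ℝ)^2)/2))
          = ∑ σ : Fin m → Bool, ∑ τ : Fin m → Bool,
            (if ¬ BB_Cst σ then Real.exp (lam * (m:ℝ)^2)
              * Real.exp (lam * ((patS σ)^2 - (m:ℝ)^2)/2) else 0)
            * Real.exp (lam * ((patS τ)^2 - (m:ℝ)^2)/2) :=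
        Fintype.sum_prod_type _
      have hms : (∑ σ : Fin m → Bool,
            (if ¬ BB_Cst σ then Real.exp (lam * (m:ℝ)^2)
              * Real.exp (lam * ((patS σ)^2 - (m:ℝ)^2)/2) else 0))
            * (∑ τ : Fin m → Bool, Real.exp (lam * ((patS τ)^2 - (m:ℝ)^2)/2))
          = ∑ σ : Fin m → Bool, ∑ τ : Fin m → Bool,
            (if ¬ BB_Cst σ then Real.exp (lam * (m:ℝ)^2)
              * Real.exp (lam * ((patS σ)^2 - (m:ℝ)^2)/2) else 0)
            * Real.exp (lam * ((patS τ)^2 - (m:ℝ)^2)/2) :=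
        Finset.sum_mul_sum _ _ _ _
      have hfactor : (∑ σ : Fin m → Bool,
            (if ¬ BB_Cst σ then Real.exp (lam * (m:ℝ)^2)
              * Real.exp (lam * ((patS σ)^2 - (m:ℝ)^2)/2) else 0))
          = Real.exp (lam * (m:ℝ)^2) * ∑ σ : Fin m → Bool,
            (if ¬ BB_Cst σ then Real.exp (lam * ((patS σ)^2 - (m:ℝ)^2)/2) else 0) := by
        rw [Finset.mul_sum]
        apply Finset.sum_congr rfl
        intro σ _
        by_cases h : BB_Cst σ
        · rw [if_neg (not_not_intro h), if_neg (not_not_intro h), mul_zero]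
        · rw [if_pos h, if_pos h]
      calc (∑ y : (Fin m → Bool) × (Fin m → Bool),
            if ¬ BB_Cst y.1 then Real.exp (lam * patH y) else 0)
          ≤ ∑ y : (Fin m → Bool) × (Fin m → Bool),
            (if ¬ BB_Cst y.1 then Real.exp (lam * (m:ℝ)^2)
              * Real.exp (lam * ((patS y.1)^2 - (m:ℝ)^2)/2) else 0)
            * Real.exp (lam * ((patS y.2)^2 - (m:ℝ)^2)/2) :=
            Finset.sum_le_sum (fun y _ => step1 y)
        _ = (∑ σ : Fin m → Bool,
            (if ¬ BB_Cst σ then Real.exp (lam * (m:ℝ)^2)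
              * Real.exp (lam * ((patS σ)^2 - (m:ℝ)^2)/2) else 0))
            * (∑ τ : Fin m → Bool, Real.exp (lam * ((patS τ)^2 - (m:ℝ)^2)/2)) := by
            rw [hsp, ← hms]
        _ = Real.exp (lam * (m:ℝ)^2)
            * (∑ σ : Fin m → Bool,
              (if ¬ BB_Cst σ then Real.exp (lam * ((patS σ)^2 - (m:ℝ)^2)/2) else 0))
            * (∑ τ : Fin m → Bool, Real.exp (lam * ((patS τ)^2 - (m:ℝ)^2)/2)) := by
            rw [hfactor]
    have hSEB_le : SEB ≤ Real.exp (lam * (m:ℝ)^2) * Gs * Fs := by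
      rw [hSEB, hGs, hFs]
      have step1 : ∀ y : (Fin m → Bool) × (Fin m → Bool),
          (if ¬ BB_Cst y.2 then Real.exp (lam * patH y) else 0)
          ≤ Real.exp (lam * ((patS y.1)^2 - (m:ℝ)^2)/2)
            * (if ¬ BB_Cst y.2 then Real.exp (lam * (m:ℝ)^2)
              * Real.exp (lam * ((patS y.2)^2 - (m:ℝ)^2)/2) else 0) := by
        intro y
        by_cases h : BB_Cst y.2
        · rw [if_neg (not_not_intro h), if_neg (not_not_intro h), mul_zero]
        · rw [if_pos h, if_pos h]
          exact (BB_patW_le lam hlam y).trans_eq (by ring)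
      have hsp : (∑ y : (Fin m → Bool) × (Fin m → Bool),
            Real.exp (lam * ((patS y.1)^2 - (m:ℝ)^2)/2)
            * (if ¬ BB_Cst y.2 then Real.exp (lam * (m:ℝ)^2)
              * Real.exp (lam * ((patS y.2)^2 - (m:ℝ)^2)/2) else 0))
          = ∑ σ : Fin m → Bool, ∑ τ : Fin m → Bool,
            Real.exp (lam * ((patS σ)^2 - (m:ℝ)^2)/2)
            * (if ¬ BB_Cst τ then Real.exp (lam * (m:ℝ)^2)
              * Real.exp (lam * ((patS τ)^2 - (m:ℝ)^2)/2) else 0) :=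
        Fintype.sum_prod_type _
      have hms : (∑ σ : Fin m → Bool, Real.exp (lam * ((patS σ)^2 - (m:ℝ)^2)/2))
            * (∑ τ : Fin m → Bool,
              (if ¬ BB_Cst τ then Real.exp (lam * (m:ℝ)^2)
                * Real.exp (lam * ((patS τ)^2 - (m:ℝ)^2)/2) else 0))
          = ∑ σ : Fin m → Bool, ∑ τ : Fin m → Bool,
            Real.exp (lam * ((patS σ)^2 - (m:ℝ)^2)/2)
            * (if ¬ BB_Cst τ then Real.exp (lam * (m:ℝ)^2)
              * Real.exp (lam * ((patS τ)^2 - (m:ℝ)^2)/2) else 0) :=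
        Finset.sum_mul_sum _ _ _ _
      have hfactor : (∑ τ : Fin m → Bool,
            (if ¬ BB_Cst τ then Real.exp (lam * (m:ℝ)^2)
              * Real.exp (lam * ((patS τ)^2 - (m:ℝ)^2)/2) else 0))
          = Real.exp (lam * (m:ℝ)^2) * ∑ τ : Fin m → Bool,
            (if ¬ BB_Cst τ then Real.exp (lam * ((patS τ)^2 - (m:ℝ)^2)/2) else 0) := by
        rw [Finset.mul_sum]
        apply Finset.sum_congr rfl
        intro τ _
        by_cases h : BB_Cst τ
        · rw [if_neg (not_not_intro h), if_neg (not_not_intro h), mul_zero]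
        · rw [if_pos h, if_pos h]
      calc (∑ y : (Fin m → Bool) × (Fin m → Bool),
            if ¬ BB_Cst y.2 then Real.exp (lam * patH y) else 0)
          ≤ ∑ y : (Fin m → Bool) × (Fin m → Bool),
            Real.exp (lam * ((patS y.1)^2 - (m:ℝ)^2)/2)
            * (if ¬ BB_Cst y.2 then Real.exp (lam * (m:ℝ)^2)
              * Real.exp (lam * ((patS y.2)^2 - (m:ℝ)^2)/2) else 0) :=
            Finset.sum_le_sum (fun y _ => step1 y)
        _ = (∑ σ : Fin m → Bool, Real.exp (lam * ((patS σ)^2 - (m:ℝ)^2)/2))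
            * (∑ τ : Fin m → Bool,
              (if ¬ BB_Cst τ then Real.exp (lam * (m:ℝ)^2)
                * Real.exp (lam * ((patS τ)^2 - (m:ℝ)^2)/2) else 0)) := by
            rw [hsp, ← hms]
        _ = Real.exp (lam * (m:ℝ)^2)
            * (∑ σ : Fin m → Bool,
              (if ¬ BB_Cst σ then Real.exp (lam * ((patS σ)^2 - (m:ℝ)^2)/2) else 0))
            * (∑ τ : Fin m → Bool, Real.exp (lam * ((patS τ)^2 - (m:ℝ)^2)/2)) := by
            rw [hfactor]
            ring
    have hGle : Gs ≤ 2*((1 + Real.exp (-(lam * ((m:ℝ)-1))))^m - 1) := by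
      rw [hGs]
      exact BB_G_le hm0 lam hlam
    have hEu : Real.exp (lam * ((m:ℝ)-1)/2) * Real.exp (-(lam * ((m:ℝ)-1)/2)) = 1 := by
      rw [← Real.exp_add, show lam * ((m:ℝ)-1)/2 + -(lam * ((m:ℝ)-1)/2) = 0 by ring,
        Real.exp_zero]
    have hu2 : (Real.exp (-(lam * ((m:ℝ)-1)/2)))^2 = Real.exp (-(lam * ((m:ℝ)-1))) := by
      rw [sq, ← Real.exp_add]
      congr 1
      ring
    have hGF : 2*(Gs*Fs) ≤ 4*(m:ℝ)^2/((m:ℝ) + Real.exp (lam * ((m:ℝ)-1)/2)) := by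
      apply BB_arith m hm (Real.exp (-(lam * ((m:ℝ)-1)/2))) (Real.exp (lam * ((m:ℝ)-1)/2))
        Gs Fs (Real.exp_pos _) (Real.exp_pos _) hEu hcase hGs0 ?_ hFs_eq
      rw [hu2]
      exact hGle
    have hFs0 : 0 ≤ Fs := by
      rw [hFs_eq]
      linarith
    have hGF0 : 0 ≤ Gs * Fs := mul_nonneg hGs0 hFs0
    have hXpos : 0 < Real.exp (lam * (m:ℝ)^2) := Real.exp_pos _
    have h2X : 2 * Real.exp (lam * (m:ℝ)^2) ≤ SZ := by linarith [hSZ_ge, hSAN0]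
    have hfracEA : (SEA + SEB)/SZ ≤ Gs*Fs := by
      rw [div_le_iff₀ hSZpos]
      calc SEA + SEB ≤ 2*(Real.exp (lam * (m:ℝ)^2) * Gs * Fs) := by
            linarith [hSEA_le, hSEB_le]
        _ = (Gs*Fs) * (2*Real.exp (lam * (m:ℝ)^2)) := by ring
        _ ≤ (Gs*Fs) * SZ := mul_le_mul_of_nonneg_left h2X hGF0
    have hfrac : 2*(SD/SZ) ≤ 4*(m:ℝ)^2/((m:ℝ) + Real.exp (lam * ((m:ℝ)-1)/2))
        + 2/(1 + Real.exp (2*(m:ℝ)*lam)) := by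
      have hd1 : SD/SZ ≤ (SEA+SEB)/SZ + SAN/SZ := by
        rw [← add_div, div_le_div_iff₀ hSZpos hSZpos]
        exact mul_le_mul_of_nonneg_right hSD_le hSZpos.le
      calc 2*(SD/SZ) ≤ 2*((SEA+SEB)/SZ) + 2*(SAN/SZ) := by linarith
        _ ≤ 2*(Gs*Fs) + 2/(1 + Real.exp (2*(m:ℝ)*lam)) := by
            linarith [hfracEA, hANTI]
        _ ≤ 4*(m:ℝ)^2/((m:ℝ) + Real.exp (lam * ((m:ℝ)-1)/2))
            + 2/(1 + Real.exp (2*(m:ℝ)*lam)) := by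
            linarith [hGF]
    rw [ge_iff_le, hcorr2]
    linarith [hfrac]

end
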